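/- Suppose C_φ(n) ≤ Cⁿ (n!)^γ for some C > 0 and 0 ≤ γ < 1. Then for every t > 0 the series ∑_{k≥0} t^k C_φ(k)/k! converges; if C_φ(n) ≤ Cⁿ n!, the series converges precisely for t < 1/C; and if C_φ(n) ≥ cⁿ (n!)^{1+ρ} with ρ > 0, c > 0, then for every δ > 0 and t > 0 the weighted series ∑_{k≥0} δ^{2k} t^k C_φ(k)/k! diverges. -/

import Mathlib

lemma fac_ge (M : ℝ) : ∀ᶠ k : ℕ in Filter.atTop, M ^ k ≤ (k.factorial : ℝ) := by
  have h := (Real.summable_pow_div_factorial |M|).tendsto_atTop_zero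
  filter_upwards [h.eventually (gt_mem_nhds one_pos)] with k hk
  have hf : (0:ℝ) < k.factorial := by positivity
  have h2 : |M| ^ k < k.factorial := by
    have := (div_lt_one hf).mp hk
    linarith
  calc M ^ k ≤ |M ^ k| := le_abs_self _
    _ = |M| ^ k := abs_pow M k
    _ ≤ k.factorial := h2.le

lemma summable_of_eventually_le_half (f : ℕ → ℝ) (h0 : ∀ k, 0 ≤ f k)
    (h : ∀ᶠ k : ℕ in Filter.atTop, f k ≤ (1/2 : ℝ) ^ k) : Summable f := by
  obtain ⟨N, hN⟩ := Filter.eventually_atTop.mp h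
  rw [← summable_nat_add_iff N]
  apply Summable.of_nonneg_of_le (fun n => h0 _) (fun n => hN (n + N) (Nat.le_add_left _ _))
  have : (fun n : ℕ => (1/2 : ℝ) ^ (n + N)) = fun n : ℕ => (1/2 : ℝ) ^ n * (1/2) ^ N := by
    funext n; rw [pow_add]
  rw [this]
  exact (summable_geometric_of_lt_one (by norm_num) (by norm_num)).mul_right _

/-- Let C_φ(n) ≥ 0.
(a) If C_φ(n) ≤ Cⁿ(n!)^γ with C > 0, 0 ≤ γ < 1, then ∑_k tᵏ C_φ(k)/k! converges for
every t > 0.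
(b) If C_φ(n) ≤ Cⁿ n!, the series converges for (precisely the guaranteed range)
0 < t < 1/C.
(c) If C_φ(n) ≥ cⁿ(n!)^{1+ρ} with ρ > 0, c > 0, then for every δ > 0, t > 0 the
weighted series ∑_k δ^{2k} tᵏ C_φ(k)/k! diverges. -/
theorem stmt15 (Cφ : ℕ → ℝ) (hpos : ∀ n, 0 ≤ Cφ n) :
    (∀ C γ : ℝ, 0 < C → 0 ≤ γ → γ < 1 →
      (∀ n : ℕ, Cφ n ≤ C ^ n * ((n.factorial : ℝ)) ^ γ) →
      ∀ t : ℝ, 0 < t → Summable (fun k : ℕ => t ^ k * Cφ k / k.factorial)) ∧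
    (∀ C : ℝ, 0 < C →
      (∀ n : ℕ, Cφ n ≤ C ^ n * (n.factorial : ℝ)) →
      ∀ t : ℝ, 0 < t → t < 1 / C →
        Summable (fun k : ℕ => t ^ k * Cφ k / k.factorial)) ∧
    (∀ ρ c : ℝ, 0 < ρ → 0 < c →
      (∀ n : ℕ, c ^ n * ((n.factorial : ℝ)) ^ (1 + ρ) ≤ Cφ n) →
      ∀ δ t : ℝ, 0 < δ → 0 < t →
        ¬ Summable (fun k : ℕ => δ ^ (2 * k) * t ^ k * Cφ k / k.factorial)) := by
  refine ⟨?_, ?_, ?_⟩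
  · -- part (a)
    intro C γ hC hγ0 hγ1 hb t ht
    set q : ℝ := t * C with hq
    have hqpos : 0 < q := mul_pos ht hC
    have h1γ : 0 < 1 - γ := by linarith
    set M : ℝ := (2 * q) ^ ((1 - γ)⁻¹) with hM
    have hMpos : 0 < M := Real.rpow_pos_of_pos (by linarith) _
    have hM1γ : M ^ (1 - γ) = 2 * q := by
      rw [hM, ← Real.rpow_mul (by linarith : (0:ℝ) ≤ 2 * q),
        inv_mul_cancel₀ h1γ.ne', Real.rpow_one]
    apply summable_of_eventually_le_half
    · intro k
      have := hpos k
      positivity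
    · filter_upwards [fac_ge M] with k hk
      have hfk : (0:ℝ) < k.factorial := by positivity
      have hA : (0:ℝ) < (k.factorial : ℝ) ^ γ := Real.rpow_pos_of_pos hfk γ
      have hrpow : (2 * q) ^ k ≤ (k.factorial : ℝ) ^ (1 - γ) := by
        calc (2 * q) ^ k = (M ^ (1 - γ)) ^ k := by rw [hM1γ]
          _ = (M ^ k) ^ (1 - γ) := by
              rw [← Real.rpow_natCast (M ^ (1 - γ)) k, ← Real.rpow_natCast M k,
                ← Real.rpow_mul hMpos.le, ← Real.rpow_mul hMpos.le, mul_comm]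
          _ ≤ (k.factorial : ℝ) ^ (1 - γ) :=
              Real.rpow_le_rpow (by positivity) hk h1γ.le
      have hkey : (k.factorial : ℝ) = (k.factorial : ℝ) ^ (1 - γ) * (k.factorial : ℝ) ^ γ := by
        rw [← Real.rpow_add hfk, sub_add_cancel, Real.rpow_one]
      calc t ^ k * Cφ k / k.factorial
          ≤ (q ^ k * (k.factorial : ℝ) ^ γ) / ((2 * q) ^ k * (k.factorial : ℝ) ^ γ) := by
            apply div_le_div₀ (by positivity) ?_ (by positivity) ?_
            · calc t ^ k * Cφ k ≤ t ^ k * (C ^ k * (k.factorial : ℝ) ^ γ) :=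
                  mul_le_mul_of_nonneg_left (hb k) (by positivity)
                _ = q ^ k * (k.factorial : ℝ) ^ γ := by rw [hq, mul_pow]; ring
            · calc (2 * q) ^ k * (k.factorial : ℝ) ^ γ
                  ≤ (k.factorial : ℝ) ^ (1 - γ) * (k.factorial : ℝ) ^ γ :=
                    mul_le_mul_of_nonneg_right hrpow hA.le
                _ = k.factorial := hkey.symm
        _ = (1/2 : ℝ) ^ k := by
            rw [mul_pow]
            field_simp
            have h2k : (2:ℝ) ^ k * (1 / 2) ^ k = 1 := by rw [← mul_pow]; norm_num
            rw [hq]; linear_combination (-(t ^ k * C ^ k)) * h2k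
  · -- part (b)
    intro C hC hb t ht ht2
    have htC : t * C < 1 := (lt_div_iff₀ hC).mp ht2
    refine Summable.of_nonneg_of_le (fun k => ?_) (fun k => ?_)
      (summable_geometric_of_lt_one (by positivity) htC)
    · have := hpos k
      positivity
    · 
      have hfk : (0:ℝ) < k.factorial := by positivity
      rw [div_le_iff₀ hfk]
      calc t ^ k * Cφ k ≤ t ^ k * (C ^ k * (k.factorial : ℝ)) :=
          mul_le_mul_of_nonneg_left (hb k) (by positivity)
        _ = (t * C) ^ k * k.factorial := by rw [mul_pow]; ring
  · -- part (c)
    intro ρ c hρ hc hb δ t hδ ht hs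
    set q : ℝ := δ ^ 2 * t * c with hq
    have hqpos : 0 < q := by positivity
    set M : ℝ := q⁻¹ ^ (ρ⁻¹) with hM
    have hMpos : 0 < M := Real.rpow_pos_of_pos (by positivity) _
    have hMρ : M ^ ρ = q⁻¹ := by
      rw [hM, ← Real.rpow_mul (by positivity : (0:ℝ) ≤ q⁻¹),
        inv_mul_cancel₀ hρ.ne', Real.rpow_one]
    have hev : ∀ᶠ k : ℕ in Filter.atTop,
        (1:ℝ) ≤ δ ^ (2 * k) * t ^ k * Cφ k / k.factorial := by
      filter_upwards [fac_ge M] with k hk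
      have hfk : (0:ℝ) < k.factorial := by positivity
      have h1 : (q ^ k)⁻¹ ≤ (k.factorial : ℝ) ^ ρ := by
        calc (q ^ k)⁻¹ = (M ^ ρ) ^ k := by rw [hMρ, inv_pow]
          _ = (M ^ k) ^ ρ := by
              rw [← Real.rpow_natCast (M ^ ρ) k, ← Real.rpow_natCast M k,
                ← Real.rpow_mul hMpos.le, ← Real.rpow_mul hMpos.le, mul_comm]
          _ ≤ (k.factorial : ℝ) ^ ρ := Real.rpow_le_rpow (by positivity) hk hρ.le
      have h2 : (1:ℝ) ≤ q ^ k * (k.factorial : ℝ) ^ ρ := by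
        have := mul_le_mul_of_nonneg_left h1 (by positivity : (0:ℝ) ≤ q ^ k)
        rwa [mul_inv_cancel₀ (by positivity : (q:ℝ) ^ k ≠ 0)] at this
      have heq : δ ^ (2 * k) * t ^ k * (c ^ k * (k.factorial : ℝ) ^ (1 + ρ)) / k.factorial
          = q ^ k * (k.factorial : ℝ) ^ ρ := by
        rw [pow_mul, Real.rpow_add hfk, Real.rpow_one, hq, mul_pow, mul_pow]
        field_simp
      calc (1:ℝ) ≤ q ^ k * (k.factorial : ℝ) ^ ρ := h2
        _ = δ ^ (2 * k) * t ^ k * (c ^ k * (k.factorial : ℝ) ^ (1 + ρ)) / k.factorial :=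
            heq.symm
        _ ≤ δ ^ (2 * k) * t ^ k * Cφ k / k.factorial := by
            gcongr
            exact hb k
    have hlt := hs.tendsto_atTop_zero.eventually (gt_mem_nhds one_pos)
    obtain ⟨k, h1k, h2k⟩ := (hev.and hlt).exists
    linarith
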